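/- arXiv:1409.7240 — 2 statements merged into one kernel-verified Lean document; each statement's English description precedes it below -/
import Mathlib

section
/- Let G be a finite simple graph whose edge set is partitioned into regions E_1, …, E_k, let V_s be a skeleton set (a set of vertices containing every boundary vertex of the partition), and let G_s be the associated skeleton graph. Then the number of connected components of G_s equals the number of connected components of G that contain at least one vertex of V_s. -/
/-- The region graph `R_i`: the graph on the full vertex set `V` whose edges are the
edges of the part `E i`. -/
def regG {V : Type*} {k : ℕ} (E : Fin k → Set (Sym2 V)) (i : Fin k) : SimpleGraph V :=
  SimpleGraph.fromEdgeSet (E i)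

/-- The vertex type of the skeleton graph: skeleton vertices (elements of `Vs`)
together with one auxiliary vertex for each pair `(i, group)`, a group being a
nonempty equivalence class of `Vs ∩ V(R i)` under connectivity in `R i` (encoded by
the connected component of `R i` containing the group). -/
def SkelV {V : Type*} {k : ℕ} (E : Fin k → Set (Sym2 V)) (Vs : Set V) : Type _ :=
  {x : V ⊕ (Σ i : Fin k, (regG E i).ConnectedComponent) //
    Sum.elim (· ∈ Vs)
      (fun p => ∃ v ∈ Vs, v ∈ (regG E p.1).support ∧
        (regG E p.1).connectedComponentMk v = p.2) x}

/-- The skeleton graph: each auxiliary vertex `(i, c)` is joined to every vertex of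
its group, i.e. to every `v ∈ Vs` with `v ∈ V(R i)` lying in the component `c`
of `R i`. -/
def skelGraph {V : Type*} {k : ℕ} (E : Fin k → Set (Sym2 V)) (Vs : Set V) :
    SimpleGraph (SkelV E Vs) where
  Adj x y :=
    (∃ (v : V) (i : Fin k) (c : (regG E i).ConnectedComponent),
      x.1 = Sum.inl v ∧ y.1 = Sum.inr ⟨i, c⟩ ∧
      v ∈ (regG E i).support ∧ (regG E i).connectedComponentMk v = c) ∨
    (∃ (v : V) (i : Fin k) (c : (regG E i).ConnectedComponent),
      y.1 = Sum.inl v ∧ x.1 = Sum.inr ⟨i, c⟩ ∧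
      v ∈ (regG E i).support ∧ (regG E i).connectedComponentMk v = c)
  symm := ⟨fun x y h => h.elim Or.inr Or.inl⟩
  loopless := ⟨by
    rintro x (⟨v, i, c, h1, h2, -, -⟩ | ⟨v, i, c, h1, h2, -, -⟩) <;>
      · rw [h1] at h2; simp at h2⟩

/-- Let the edge set of a finite simple graph `G` be partitioned into
regions `E 0, …, E (k-1)`, let `Vs` be a skeleton set (containing every boundary
vertex), and let `skelGraph E Vs` be the associated skeleton graph.  Then the
number of connected components of the skeleton graph equals the number of connected
components of `G` containing at least one vertex of `Vs`. -/
theorem stmt6 {V : Type*} [Fintype V] (G : SimpleGraph V) {k : ℕ}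
    (E : Fin k → Set (Sym2 V))
    (hunion : ⋃ i, E i = G.edgeSet)
    (hdisj : ∀ i j, i ≠ j → Disjoint (E i) (E j))
    (Vs : Set V)
    (hVs : ∀ v : V,
      (∃ i j, i ≠ j ∧ (∃ e ∈ E i, v ∈ e) ∧ (∃ e' ∈ E j, v ∈ e')) → v ∈ Vs) :
    Nat.card (skelGraph E Vs).ConnectedComponent =
      Nat.card {c : G.ConnectedComponent // ∃ v ∈ Vs, G.connectedComponentMk v = c} := by
  classical
  set S := skelGraph E Vs with hS
  have hle : ∀ i, regG E i ≤ G := by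
    intro i v w h
    rw [regG, SimpleGraph.fromEdgeSet_adj] at h
    have : s(v, w) ∈ G.edgeSet := by
      rw [← hunion]; exact Set.mem_iUnion.mpr ⟨i, h.1⟩
    exact this
  -- first vertex of a nontrivial reachability is in the support
  have supOf : ∀ (i : Fin k) (u a : V), (regG E i).Reachable u a → u ≠ a →
      u ∈ (regG E i).support := by
    intro i u a hr hne
    obtain ⟨p⟩ := hr
    cases p with
    | nil => exact absurd rfl hne
    | cons h _ => exact ⟨_, h⟩
  -- keyA : two Vs vertices reachable within one region are skeleton-reachable
  have keyA : ∀ (i : Fin k) (u w : V) (hu : u ∈ Vs) (hw : w ∈ Vs),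
      (regG E i).Reachable u w →
      S.Reachable ⟨Sum.inl u, hu⟩ ⟨Sum.inl w, hw⟩ := by
    intro i u w hu hw hr
    by_cases huw : u = w
    · subst huw; exact SimpleGraph.Reachable.refl _
    · have husup : u ∈ (regG E i).support := supOf i u w hr huw
      have hwsup : w ∈ (regG E i).support := supOf i w u hr.symm (Ne.symm huw)
      set c := (regG E i).connectedComponentMk u with hc
      have hx : S.Adj ⟨Sum.inl u, hu⟩
          ⟨Sum.inr ⟨i, c⟩, ⟨u, hu, husup, rfl⟩⟩ :=
        Or.inl ⟨u, i, c, rfl, rfl, husup, rfl⟩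
      have hy : S.Adj ⟨Sum.inr ⟨i, c⟩, ⟨u, hu, husup, rfl⟩⟩
          ⟨Sum.inl w, hw⟩ :=
        Or.inr ⟨w, i, c, rfl, rfl, hwsup, (SimpleGraph.ConnectedComponent.eq.mpr hr.symm)⟩
      exact hx.reachable.trans hy.reachable
  -- keyB : main walk induction
  have keyB : ∀ (u w : V) (p : G.Walk u w) (i : Fin k) (a : V) (ha : a ∈ Vs),
      (regG E i).Reachable a u → ∀ hw : w ∈ Vs,
      S.Reachable ⟨Sum.inl a, ha⟩ ⟨Sum.inl w, hw⟩ := by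
    intro u w p
    induction p with
    | nil =>
      intro i a ha har hw
      exact keyA i a _ ha hw har
    | @cons u x w h p ih =>
      intro i a ha har hw
      have hmem : s(u, x) ∈ G.edgeSet := h
      obtain ⟨j, hj⟩ : ∃ j, s(u, x) ∈ E j := by
        rw [← hunion] at hmem
        exact Set.mem_iUnion.mp hmem
      have hadj : (regG E j).Adj u x := by
        rw [regG, SimpleGraph.fromEdgeSet_adj]
        exact ⟨hj, h.ne⟩
      by_cases hji : j = i
      · rw [hji] at hadj
        exact ih i a ha (har.trans hadj.reachable) hw
      · by_cases hau : a = u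
        · subst hau
          exact ih j a ha hadj.reachable hw
        · have husup : u ∈ (regG E i).support := supOf i u a har.symm (fun h' => hau h'.symm)
          obtain ⟨y, hy⟩ := husup
          have hyE : s(u, y) ∈ E i := by
            have hy : (regG E i).Adj u y := hy
            rw [regG, SimpleGraph.fromEdgeSet_adj] at hy
            exact hy.1
          have huVs : u ∈ Vs := hVs u ⟨j, i, hji,
            ⟨s(u, x), hj, Sym2.mem_mk_left u x⟩, ⟨s(u, y), hyE, Sym2.mem_mk_left u y⟩⟩
          exact (keyA i a u ha huVs har).trans (ih j u huVs hadj.reachable hw)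
  -- keyC
  have keyC : ∀ (u w : V) (hu : u ∈ Vs) (hw : w ∈ Vs), G.Reachable u w →
      S.Reachable ⟨Sum.inl u, hu⟩ ⟨Sum.inl w, hw⟩ := by
    intro u w hu hw hr
    obtain ⟨p⟩ := hr
    cases p with
    | nil => exact SimpleGraph.Reachable.refl _
    | @cons u x w h p =>
      have hmem : s(u, x) ∈ G.edgeSet := h
      obtain ⟨j, hj⟩ : ∃ j, s(u, x) ∈ E j := by
        rw [← hunion] at hmem
        exact Set.mem_iUnion.mp hmem
      exact keyB u w (SimpleGraph.Walk.cons h p) j u hu (SimpleGraph.Reachable.refl u) hw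
  -- the vertex map
  set f : SkelV E Vs → G.ConnectedComponent := fun x =>
    Sum.elim (fun v => G.connectedComponentMk v)
      (fun p => p.2.map (SimpleGraph.Hom.ofLE (hle p.1))) x.1 with hf
  have hfadj : ∀ x y : SkelV E Vs, S.Adj x y → f x = f y := by
    rintro x y (⟨v, i, c, hx, hy, hsup, hc⟩ | ⟨v, i, c, hy, hx, hsup, hc⟩) <;>
    · rw [hf]
      simp only [hx, hy, Sum.elim_inl, Sum.elim_inr]
      rw [← hc, SimpleGraph.ConnectedComponent.map_mk]
      rfl
  have hfwalk : ∀ (x y : SkelV E Vs), S.Walk x y → f x = f y := by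
    intro x y p
    induction p with
    | nil => rfl
    | cons h _ ih => exact (hfadj _ _ h).trans ih
  set F : S.ConnectedComponent → G.ConnectedComponent :=
    SimpleGraph.ConnectedComponent.lift f (fun x y p _ => hfwalk x y p) with hF
  -- witnesses
  have witness : ∀ x : SkelV E Vs, ∃ (v : V) (hv : v ∈ Vs),
      S.Reachable x ⟨Sum.inl v, hv⟩ ∧ f x = G.connectedComponentMk v := by
    rintro ⟨x1 | ⟨i, c⟩, hx⟩
    · exact ⟨x1, hx, SimpleGraph.Reachable.refl _, rfl⟩
    · obtain ⟨v, hv, hsup, hc⟩ := hx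
      change v ∈ (regG E i).support at hsup
      change (regG E i).connectedComponentMk v = c at hc
      refine ⟨v, hv, ?_, ?_⟩
      · exact (SimpleGraph.Adj.reachable
          (Or.inr ⟨v, i, c, rfl, rfl, hsup, hc⟩ :
            S.Adj ⟨Sum.inr ⟨i, c⟩, ⟨v, hv, hsup, hc⟩⟩ ⟨Sum.inl v, hv⟩))
      · rw [hf]
        simp only [Sum.elim_inr]
        rw [← hc, SimpleGraph.ConnectedComponent.map_mk]
        rfl
  have Finj : Function.Injective F := by
    intro d d'
    refine SimpleGraph.ConnectedComponent.ind₂ ?_ d d'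
    intro x y hFxy
    simp only [hF, SimpleGraph.ConnectedComponent.lift_mk] at hFxy
    obtain ⟨vx, hvx, hrx, hfx⟩ := witness x
    obtain ⟨vy, hvy, hry, hfy⟩ := witness y
    have : G.connectedComponentMk vx = G.connectedComponentMk vy := by
      rw [← hfx, ← hfy, hFxy]
    have hre : G.Reachable vx vy := SimpleGraph.ConnectedComponent.eq.mp this
    have := keyC vx vy hvx hvy hre
    exact SimpleGraph.ConnectedComponent.eq.mpr (hrx.trans (this.trans hry.symm))
  have Fmem : ∀ d : S.ConnectedComponent, ∃ v ∈ Vs, G.connectedComponentMk v = F d := by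
    refine SimpleGraph.ConnectedComponent.ind ?_
    intro x
    obtain ⟨v, hv, _, hfx⟩ := witness x
    exact ⟨v, hv, by simp [hF, SimpleGraph.ConnectedComponent.lift_mk, hfx]⟩
  have Fsurj : ∀ c : {c : G.ConnectedComponent // ∃ v ∈ Vs, G.connectedComponentMk v = c},
      ∃ d, F d = c.1 := by
    rintro ⟨c, v, hv, hc⟩
    exact ⟨S.connectedComponentMk ⟨Sum.inl v, hv⟩, by
      exact hc⟩
  have : Function.Bijective
      (fun d => (⟨F d, Fmem d⟩ :
        {c : G.ConnectedComponent // ∃ v ∈ Vs, G.connectedComponentMk v = c})) := by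
    constructor
    · intro d d' h
      exact Finj (congrArg Subtype.val h)
    · rintro ⟨c, hc⟩
      obtain ⟨d, hd⟩ := Fsurj ⟨c, hc⟩
      exact ⟨d, Subtype.ext hd⟩
  exact Nat.card_congr (Equiv.ofBijective _ this)
end

section
/- Let G be a finite simple graph whose edge set is partitioned into regions E_1, …, E_k, let V_s be a skeleton set (a set of vertices containing every boundary vertex of the partition), and let G_s be the associated skeleton graph. Let e be an edge of G with e ∈ E_j, let G′ = G − e be equipped with the region partition E_1, …, E_j ∖ {e}, …, E_k and the same skeleton set V_s, and let G′_s be the skeleton graph of G′. If every pair of vertices u, w ∈ V_s ∩ V(R_j) that is connected in the region graph R_j is also connected in R_j − e, then the number of connected components of G′_s equals the number of connected components of G_s. -/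
open SimpleGraph

section Aux

variable {V : Type*} {k : ℕ} {E E' : Fin k → Set (Sym2 V)} {Vs : Set V}

lemma mem_support_of_reachable_ne {G : SimpleGraph V} {v w : V}
    (h : G.Reachable v w) (hne : v ≠ w) : v ∈ G.support := by
  obtain ⟨p⟩ := h
  cases p with
  | nil => exact absurd rfl hne
  | cons ha _ => exact ⟨_, ha⟩

/-- push a skeleton vertex along inclusion of region graphs -/
def skelPush (hle : ∀ i, regG E' i ≤ regG E i) : SkelV E' Vs → SkelV E Vs
  | ⟨Sum.inl v, hv⟩ => ⟨Sum.inl v, hv⟩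
  | ⟨Sum.inr p, hp⟩ =>
    ⟨Sum.inr ⟨p.1, (ConnectedComponent.map (Hom.ofLE (hle p.1)) p.2)⟩, by
      obtain ⟨v, hvVs, hvs, hvc⟩ := hp
      refine ⟨v, hvVs, support_mono (hle p.1) hvs, ?_⟩
      rw [← hvc, ConnectedComponent.map_mk]
      rfl⟩

variable (h2 : ∀ i, ∀ v ∈ Vs, ∀ w ∈ Vs, v ∈ (regG E i).support → w ∈ (regG E i).support →
      (regG E i).Reachable v w →
      v = w ∨ (v ∈ (regG E' i).support ∧ w ∈ (regG E' i).support ∧ (regG E' i).Reachable v w))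

include h2 in
lemma skel_reach (i : Fin k) (v : V) (hv : v ∈ Vs) (w : V) (hw : w ∈ Vs)
    (hsv : v ∈ (regG E i).support) (hsw : w ∈ (regG E i).support)
    (hr : (regG E i).Reachable v w) :
    (skelGraph E' Vs).Reachable ⟨Sum.inl v, hv⟩ ⟨Sum.inl w, hw⟩ := by
  rcases h2 i v hv w hw hsv hsw hr with rfl | ⟨hsv', hsw', hr'⟩
  · exact Reachable.refl _
  · have hcw : (regG E' i).connectedComponentMk w = (regG E' i).connectedComponentMk v :=
      ConnectedComponent.eq.mpr hr'.symm
    have ha1 : (skelGraph E' Vs).Adj ⟨Sum.inl v, hv⟩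
        ⟨Sum.inr ⟨i, (regG E' i).connectedComponentMk v⟩, ⟨v, hv, hsv', rfl⟩⟩ :=
      Or.inl ⟨v, i, _, rfl, rfl, hsv', rfl⟩
    have ha2 : (skelGraph E' Vs).Adj
        ⟨Sum.inr ⟨i, (regG E' i).connectedComponentMk v⟩, ⟨v, hv, hsv', rfl⟩⟩
        ⟨Sum.inl w, hw⟩ :=
      Or.inr ⟨w, i, _, rfl, rfl, hsw', hcw⟩
    exact ha1.reachable.trans ha2.reachable

/-- map to a component of the primed skeleton graph -/
noncomputable def gmap : SkelV E Vs → (skelGraph E' Vs).ConnectedComponent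
  | ⟨Sum.inl v, hv⟩ => (skelGraph E' Vs).connectedComponentMk ⟨Sum.inl v, hv⟩
  | ⟨Sum.inr p, hp⟩ =>
    (skelGraph E' Vs).connectedComponentMk ⟨Sum.inl hp.choose, hp.choose_spec.1⟩

include h2 in
lemma gmap_inr (p : Σ i : Fin k, (regG E i).ConnectedComponent)
    (hp : ∃ v ∈ Vs, v ∈ (regG E p.1).support ∧ (regG E p.1).connectedComponentMk v = p.2)
    (v : V) (hv : v ∈ Vs) (hsv : v ∈ (regG E p.1).support)
    (hcv : (regG E p.1).connectedComponentMk v = p.2) :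
    gmap (E' := E') ⟨Sum.inr p, hp⟩ = (skelGraph E' Vs).connectedComponentMk ⟨Sum.inl v, hv⟩ := by
  obtain ⟨hv0Vs, hs0, hc0⟩ := hp.choose_spec
  have hr : (regG E p.1).Reachable hp.choose v := by
    rw [← ConnectedComponent.eq, hc0, hcv]
  exact ConnectedComponent.sound (skel_reach h2 p.1 _ hv0Vs v hv hs0 hsv hr)

include h2 in
lemma gmap_adj {x y : SkelV E Vs} (h : (skelGraph E Vs).Adj x y) :
    gmap (E' := E') x = gmap (E' := E') y := by
  obtain ⟨x1, hx2⟩ := x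
  obtain ⟨y1, hy2⟩ := y
  rcases h with ⟨v, i, c, hx1, hy1, hsv, hvc⟩ | ⟨v, i, c, hy1, hx1, hsv, hvc⟩ <;>
    dsimp only at hx1 hy1 <;> subst hx1 <;> subst hy1
  · exact (gmap_inr h2 ⟨i, c⟩ hy2 v hx2 hsv hvc).symm
  · exact gmap_inr h2 ⟨i, c⟩ hx2 v hy2 hsv hvc

include h2 in
lemma gmap_walk {x y : SkelV E Vs} (p : (skelGraph E Vs).Walk x y) :
    gmap (E' := E') x = gmap (E' := E') y := by
  induction p with
  | nil => rfl
  | cons ha _ ih => exact (gmap_adj h2 ha).trans ih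

/-- the forward hom -/
def skelHom (hle : ∀ i, regG E' i ≤ regG E i) : skelGraph E' Vs →g skelGraph E Vs where
  toFun := skelPush hle
  map_rel' := by
    rintro ⟨x1, hx2⟩ ⟨y1, hy2⟩ (⟨v, i, c, hx1, hy1, hsv, hvc⟩ | ⟨v, i, c, hy1, hx1, hsv, hvc⟩) <;>
      dsimp only at hx1 hy1 <;> subst hx1 <;> subst hy1
    · refine Or.inl ⟨v, i, ConnectedComponent.map (Hom.ofLE (hle i)) c,
        rfl, rfl, support_mono (hle i) hsv, ?_⟩
      rw [← hvc, ConnectedComponent.map_mk]; rfl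
    · refine Or.inr ⟨v, i, ConnectedComponent.map (Hom.ofLE (hle i)) c,
        rfl, rfl, support_mono (hle i) hsv, ?_⟩
      rw [← hvc, ConnectedComponent.map_mk]; rfl

include h2 in
theorem skel_card_eq (hle : ∀ i, regG E' i ≤ regG E i) :
    Nat.card (skelGraph E' Vs).ConnectedComponent =
      Nat.card (skelGraph E Vs).ConnectedComponent := by
  classical
  refine Nat.card_congr ⟨ConnectedComponent.map (skelHom hle),
    Quot.lift (gmap (E' := E')) (fun a b hab => ?_), ?_, ?_⟩
  · obtain ⟨p⟩ := hab
    exact gmap_walk h2 p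
  · -- left inverse : ψ (F d) = d
    refine ConnectedComponent.ind fun x => ?_
    rw [ConnectedComponent.map_mk]
    obtain ⟨x1, hx2⟩ := x
    cases x1 with
    | inl v => rfl
    | inr p =>
      show gmap (skelPush hle ⟨Sum.inr p, hx2⟩) = _
      obtain ⟨v, hvVs, hsv, hcv⟩ := id hx2
      have key : gmap (E := E) (E' := E') (skelPush hle ⟨Sum.inr p, hx2⟩) =
          (skelGraph E' Vs).connectedComponentMk ⟨Sum.inl v, hvVs⟩ := by
        apply gmap_inr h2
        · exact support_mono (hle p.1) hsv
        · rw [← hcv]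
          exact ((ConnectedComponent.map_mk (Hom.ofLE (hle p.1)) v).symm)
      rw [key]
      exact ConnectedComponent.sound
        (Adj.reachable (Or.inl ⟨v, p.1, p.2, rfl, rfl, hsv, hcv⟩))
  · -- right inverse : F (ψ d) = d
    refine ConnectedComponent.ind fun x => ?_
    obtain ⟨x1, hx2⟩ := x
    cases x1 with
    | inl v => rfl
    | inr p =>
      show ConnectedComponent.map (skelHom hle) (gmap ⟨Sum.inr p, hx2⟩) = _
      rw [show gmap (E' := E') (⟨Sum.inr p, hx2⟩ : SkelV E Vs) =
        (skelGraph E' Vs).connectedComponentMk ⟨Sum.inl hx2.choose, hx2.choose_spec.1⟩ from rfl]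
      exact ConnectedComponent.sound
        (Adj.reachable (Or.inl ⟨hx2.choose, p.1, p.2, rfl, rfl,
          hx2.choose_spec.2.1, hx2.choose_spec.2.2⟩))

end Aux

/-- With `G`, a region partition `E`, a skeleton set `Vs` and the
skeleton graph as before, let `e ∈ E j` be an edge of `G` and equip
`G' = G − e` with the partition `fun i => E i \ {e}` (which removes `e` from
`E j` and leaves the other parts unchanged, by disjointness) and the same skeleton
set.  If every pair of vertices of `Vs ∩ V(R j)` that is connected in the region
graph `R j` remains connected in `R j − e`, then the skeleton graph of `G'` has
the same number of connected components as the skeleton graph of `G`. -/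
theorem stmt11 {V : Type*} [Fintype V] (G : SimpleGraph V) {k : ℕ}
    (E : Fin k → Set (Sym2 V))
    (hunion : ⋃ i, E i = G.edgeSet)
    (hdisj : ∀ i j, i ≠ j → Disjoint (E i) (E j))
    (Vs : Set V)
    (hVs : ∀ v : V,
      (∃ i j, i ≠ j ∧ (∃ e ∈ E i, v ∈ e) ∧ (∃ e' ∈ E j, v ∈ e')) → v ∈ Vs)
    (j : Fin k) (e : Sym2 V) (he : e ∈ E j)
    (hconn : ∀ u ∈ Vs, ∀ w ∈ Vs,
      u ∈ (regG E j).support → w ∈ (regG E j).support →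
      (regG E j).Reachable u w → ((regG E j).deleteEdges {e}).Reachable u w) :
    Nat.card (skelGraph (fun i => E i \ {e}) Vs).ConnectedComponent =
      Nat.card (skelGraph E Vs).ConnectedComponent := by
  have hle : ∀ i, regG (fun i => E i \ {e}) i ≤ regG E i := fun i =>
    SimpleGraph.fromEdgeSet_mono Set.diff_subset
  refine skel_card_eq (fun i v hv w hw hsv hsw hr => ?_) hle
  by_cases hij : i = j
  · subst hij
    have heq : regG (fun i => E i \ {e}) i = (regG E i).deleteEdges {e} := by
      ext a b
      simp only [regG, fromEdgeSet_adj, deleteEdges_adj, Set.mem_diff, Set.mem_singleton_iff]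
      tauto
    have hr' : (regG (fun i => E i \ {e}) i).Reachable v w := by
      rw [heq]; exact hconn v hv w hw hsv hsw hr
    rcases eq_or_ne v w with rfl | hvw
    · exact Or.inl rfl
    · exact Or.inr ⟨mem_support_of_reachable_ne hr' hvw,
        mem_support_of_reachable_ne hr'.symm hvw.symm, hr'⟩
  · have he' : e ∉ E i := fun h => Set.disjoint_left.mp (hdisj i j hij) h he
    have heq : regG (fun i => E i \ {e}) i = regG E i := by
      simp only [regG]
      rw [Set.diff_singleton_eq_self he']
    rw [heq]
    exact Or.inr ⟨hsv, hsw, hr⟩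
end
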